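/- As η → 0⁺, for fixed k > 0 and fixed μ with 0 < μ < k² + 1/η eventually, the penalized Stokes determinant G*₋(k, μ, η) = k·cotanh(πk/2) − (1−2ημ)(1−ημ) q₀ cotan(πq₀/2) + μ√(η(1−ηq₀²))(1−2ημ) cotanh(−πq₁/2), with q₀ = √(μ−k²) and q₁ = √(1/η − μ + k²), converges to Gᵒ₋(k, μ) = k·cotanh(πk/2) − q₀ cotan(πq₀/2), provided μ > k² and πq₀/2 is not a multiple of π. -/

import Mathlib

open Real Set Filter Topology

lemma sqrt_tendsto_atTop' : Tendsto Real.sqrt atTop atTop := by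
  rw [tendsto_atTop]
  intro b
  filter_upwards [eventually_ge_atTop (b ^ 2)] with x hx
  calc b ≤ |b| := le_abs_self b
    _ = Real.sqrt (b ^ 2) := (Real.sqrt_sq_eq_abs b).symm
    _ ≤ Real.sqrt x := Real.sqrt_le_sqrt hx

lemma coth_tendsto_atBot :
    Tendsto (fun x : ℝ => Real.cosh x / Real.sinh x) atBot (𝓝 (-1)) := by
  have h1 : Tendsto (fun x : ℝ => (Real.exp (2 * x) + 1) / (Real.exp (2 * x) - 1))
      atBot (𝓝 (-1)) := by
    have he : Tendsto (fun x : ℝ => Real.exp (2 * x)) atBot (𝓝 0) :=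
      Real.tendsto_exp_atBot.comp (tendsto_atBot_atBot_of_monotone
        (fun a b hab => by linarith) (fun b => ⟨b / 2, by linarith⟩))
    have := (he.add (tendsto_const_nhds (x := (1:ℝ)))).div (he.sub (tendsto_const_nhds (x := (1:ℝ)))) (by norm_num)
    convert this using 2 <;> norm_num
  refine h1.congr' ?_
  filter_upwards [eventually_lt_atBot (0 : ℝ)] with x hx
  have hx2 : Real.exp x ≠ 0 := (Real.exp_pos x).ne'
  have hs : Real.sinh x ≠ 0 := Real.sinh_ne_zero.2 hx.ne
  rw [Real.cosh_eq, Real.sinh_eq] at *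
  rw [div_eq_div_iff]
  · rw [show (2 : ℝ) * x = x + x by ring, Real.exp_add]
    have : Real.exp x * Real.exp (-x) = 1 := by
      rw [← Real.exp_add]; simp
    linear_combination (-(Real.exp x)) * this
  · intro h
    apply hs
    rw [show (2 : ℝ) * x = x + x by ring, Real.exp_add] at h
    have h1 : Real.exp x * Real.exp (-x) = 1 := by rw [← Real.exp_add]; simp
    have : Real.exp x * Real.exp x = Real.exp x * Real.exp (-x) := by
      rw [h1]; linarith
    have := mul_left_cancel₀ hx2 this
    rw [this]; ring
  · exact hs

/-- for fixed `k > 0` and `μ > k²` with `π q₀/2` not a multiple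
of `π`, the penalized Stokes determinant `G*₋(k,μ,η)` converges to the
Dirichlet determinant `Gᵒ₋(k,μ) = k cotanh(πk/2) − q₀ cotan(πq₀/2)` as `η → 0⁺`. -/
theorem stmt_12 (k μ : ℝ) (hk : 0 < k) (hμ : k ^ 2 < μ)
    (q₀ : ℝ) (hq₀ : q₀ = Real.sqrt (μ - k ^ 2))
    (hnotmult : ¬∃ n : ℤ, π * q₀ / 2 = (n : ℝ) * π) :
    Tendsto (fun η : ℝ =>
        k * (Real.cosh (π * k / 2) / Real.sinh (π * k / 2)) -
          (1 - 2 * η * μ) * (1 - η * μ) * q₀ *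
            (Real.cos (π * q₀ / 2) / Real.sin (π * q₀ / 2)) +
          μ * Real.sqrt (η * (1 - η * q₀ ^ 2)) * (1 - 2 * η * μ) *
            (Real.cosh (-(π * Real.sqrt (1 / η - μ + k ^ 2)) / 2) /
              Real.sinh (-(π * Real.sqrt (1 / η - μ + k ^ 2)) / 2)))
      (nhdsWithin 0 (Ioi 0))
      (nhds (k * (Real.cosh (π * k / 2) / Real.sinh (π * k / 2)) -
        q₀ * (Real.cos (π * q₀ / 2) / Real.sin (π * q₀ / 2)))) := by
  set A := k * (Real.cosh (π * k / 2) / Real.sinh (π * k / 2)) with hA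
  set C := Real.cos (π * q₀ / 2) / Real.sin (π * q₀ / 2) with hC
  -- second term tends to q₀ * C
  have hB : Tendsto (fun η : ℝ => (1 - 2 * η * μ) * (1 - η * μ) * q₀ * C)
      (nhdsWithin 0 (Ioi 0)) (𝓝 (q₀ * C)) := by
    have : ContinuousAt (fun η : ℝ => (1 - 2 * η * μ) * (1 - η * μ) * q₀ * C) 0 := by
      fun_prop
    have := this.continuousWithinAt (s := Ioi 0)
    simpa using this.tendsto
  -- third term tends to 0
  have hargbot : Tendsto (fun η : ℝ => -(π * Real.sqrt (1 / η - μ + k ^ 2)) / 2)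
      (nhdsWithin 0 (Ioi 0)) atBot := by
    have h1 : Tendsto (fun η : ℝ => 1 / η - μ + k ^ 2) (nhdsWithin 0 (Ioi 0)) atTop := by
      have : Tendsto (fun η : ℝ => 1 / η) (nhdsWithin 0 (Ioi 0)) atTop := by
        simpa [one_div] using tendsto_inv_nhdsGT_zero (𝕜 := ℝ)
      exact (this.atTop_add (tendsto_const_nhds (x := -μ + k ^ 2))).congr (fun η => by ring)
    have h2 := sqrt_tendsto_atTop'.comp h1
    have h3 : Tendsto (fun η : ℝ => π * Real.sqrt (1 / η - μ + k ^ 2))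
        (nhdsWithin 0 (Ioi 0)) atTop :=
      Tendsto.const_mul_atTop Real.pi_pos h2
    have h5 : Tendsto (fun η : ℝ => -(π * Real.sqrt (1 / η - μ + k ^ 2)))
        (nhdsWithin 0 (Ioi 0)) atBot := tendsto_neg_atTop_atBot.comp h3
    exact h5.atBot_div_const (by norm_num)
  have hcoth : Tendsto (fun η : ℝ =>
      Real.cosh (-(π * Real.sqrt (1 / η - μ + k ^ 2)) / 2) /
        Real.sinh (-(π * Real.sqrt (1 / η - μ + k ^ 2)) / 2))
      (nhdsWithin 0 (Ioi 0)) (𝓝 (-1)) := coth_tendsto_atBot.comp hargbot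
  have hpref : Tendsto (fun η : ℝ => μ * Real.sqrt (η * (1 - η * q₀ ^ 2)) * (1 - 2 * η * μ))
      (nhdsWithin 0 (Ioi 0)) (𝓝 0) := by
    have : ContinuousAt (fun η : ℝ => μ * Real.sqrt (η * (1 - η * q₀ ^ 2)) * (1 - 2 * η * μ)) 0 := by
      have hcs : Continuous fun η : ℝ => Real.sqrt (η * (1 - η * q₀ ^ 2)) :=
        (continuous_id.mul (by continuity)).sqrt
      exact ((continuous_const.mul hcs).mul (by continuity)).continuousAt
    have := this.continuousWithinAt (s := Ioi 0)
    simpa using this.tendsto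
  have hT : Tendsto (fun η : ℝ =>
      μ * Real.sqrt (η * (1 - η * q₀ ^ 2)) * (1 - 2 * η * μ) *
        (Real.cosh (-(π * Real.sqrt (1 / η - μ + k ^ 2)) / 2) /
          Real.sinh (-(π * Real.sqrt (1 / η - μ + k ^ 2)) / 2)))
      (nhdsWithin 0 (Ioi 0)) (𝓝 0) := by
    have := hpref.mul hcoth
    simpa using this
  have := ((tendsto_const_nhds (x := A) (f := nhdsWithin (0:ℝ) (Ioi 0))).sub hB).add hT
  simpa using this
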